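/- Let α, β > −1 and let n ≤ k be natural numbers. Then ∫_{−1}^{1} x^k 𝑃̃_n^{(α,β)}(x) (1−x)^α(1+x)^β dx = (1/(2^n √h_n)) · binom(k,n) · ∫_{−1}^{1} x^{k−n} (1−x)^{n+α} (1+x)^{n+β} dx, where 𝑃̃_n^{(α,β)} = P_n^{(α,β)}/√h_n is the normalized Jacobi polynomial and h_n = 2^{α+β+1} Γ(n+α+1)Γ(n+β+1) / (n! (2n+α+β+1) Γ(n+α+β+1)). -/

import Mathlib

open MeasureTheory

section JacobiAuxSection
open Set Filter Polynomial intervalIntegral Interval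


namespace JacobiMomentAux

/-- a.e. equality on the interval from equality on `Ioo (-1) 1`. -/
lemma ae_restrict_of_Ioo {f g : ℝ → ℝ}
    (h : ∀ x ∈ Ioo (-1:ℝ) 1, f x = g x) :
    f =ᶠ[ae (volume.restrict (Ι (-1:ℝ) 1))] g := by
  have h1 : ∀ᵐ (x : ℝ) ∂(volume.restrict (Ι (-1:ℝ) 1)), x ≠ 1 := by
    apply ae_restrict_of_ae
    rw [ae_iff]
    simpa using (Real.volume_singleton (a := (1:ℝ)))
  have h2 : ∀ᵐ (x : ℝ) ∂(volume.restrict (Ι (-1:ℝ) 1)), x ∈ Ι (-1:ℝ) 1 :=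
    ae_restrict_mem measurableSet_uIoc
  filter_upwards [h1, h2] with x hx1 hx2
  rw [uIoc_of_le (by norm_num : (-1:ℝ) ≤ 1)] at hx2
  exact h x ⟨hx2.1, lt_of_le_of_ne hx2.2 hx1⟩

lemma integral_congr_Ioo {f g : ℝ → ℝ}
    (h : ∀ x ∈ Ioo (-1:ℝ) 1, f x = g x) :
    ∫ x in (-1:ℝ)..1, f x = ∫ x in (-1:ℝ)..1, g x := by
  apply intervalIntegral.integral_congr_ae
  have := ae_restrict_of_Ioo h
  rw [EventuallyEq, ae_restrict_iff' measurableSet_uIoc] at this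
  filter_upwards [this] with x hx hx2 using hx hx2

lemma II_congr_Ioo {f g : ℝ → ℝ}
    (h : ∀ x ∈ Ioo (-1:ℝ) 1, f x = g x)
    (hf : IntervalIntegrable f volume (-1) 1) :
    IntervalIntegrable g volume (-1) 1 :=
  hf.congr_ae (ae_restrict_of_Ioo h)

/-- Integrability of the Jacobi-type weight times a polynomial, right half. -/
lemma II_right (c d : ℝ) (hc : -1 < c) (p : ℝ[X]) :
    IntervalIntegrable (fun x => (1-x) ^ c * (1+x) ^ d * p.eval x) volume 0 1 := by
  obtain ⟨C, hC⟩ := (isCompact_Icc (a := (0:ℝ)) (b := 1)).exists_bound_of_continuousOn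
    (Continuous.continuousOn p.continuous)
  set K : ℝ := max 1 (2 ^ d) with hK
  set M : ℝ := K * max C 0 with hM
  have hK0 : (0:ℝ) < K := lt_of_lt_of_le one_pos (le_max_left _ _)
  have hM0 : (0:ℝ) ≤ M := mul_nonneg hK0.le (le_max_right _ _)
  have base : IntervalIntegrable (fun x : ℝ => x ^ c) volume 1 0 :=
    intervalIntegrable_rpow' hc
  have h1 : IntervalIntegrable (fun x : ℝ => (1 - x) ^ c) volume 0 1 := by
    simpa using base.comp_sub_left 1
  refine (h1.const_mul M).mono_fun ((by fun_prop : Measurable fun x : ℝ => (1-x) ^ c * (1+x) ^ d * p.eval x).aestronglyMeasurable) ?_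
  rw [uIoc_of_le (by norm_num : (0:ℝ) ≤ 1)]
  filter_upwards [ae_restrict_mem measurableSet_Ioc] with x hx
  have hx1 : (0:ℝ) ≤ 1 - x := by linarith [hx.2]
  have hx2 : (1:ℝ) ≤ 1 + x := by linarith [hx.1.le]
  have hd1 : (1 + x) ^ d ≤ K := by
    rcases le_or_gt 0 d with h | h
    · exact le_trans (Real.rpow_le_rpow (by linarith) (by linarith [hx.2]) h) (le_max_right _ _)
    · refine le_trans ?_ (le_max_left _ _)
      simpa using Real.rpow_le_rpow_of_nonpos one_pos hx2 h.le
  have hp : |p.eval x| ≤ max C 0 := by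
    have := hC x ⟨hx.1.le, hx.2⟩
    rw [Real.norm_eq_abs] at this
    exact le_trans this (le_max_left _ _)
  have e1 : (0:ℝ) ≤ (1-x) ^ c := Real.rpow_nonneg hx1 c
  have e2 : (0:ℝ) ≤ (1+x) ^ d := Real.rpow_nonneg (by linarith) d
  simp only [Real.norm_eq_abs, abs_mul]
  rw [abs_of_nonneg e1, abs_of_nonneg e2, abs_of_nonneg hM0]
  calc (1-x)^c * (1+x)^d * |p.eval x| ≤ (1-x)^c * K * max C 0 := by
        gcongr
    _ = M * (1-x)^c := by ring

/-- Integrability of the Jacobi-type weight times a polynomial on `(-1,1)`. -/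
lemma II_weight (c d : ℝ) (hc : -1 < c) (hd : -1 < d) (p : ℝ[X]) :
    IntervalIntegrable (fun x => (1-x) ^ c * (1+x) ^ d * p.eval x) volume (-1) 1 := by
  have hr := II_right c d hc p
  have hl0 := II_right d c hd (p.comp (-X))
  have hl : IntervalIntegrable (fun x => (1-x) ^ c * (1+x) ^ d * p.eval x) volume (-1) 0 := by
    have h2 := (hl0.comp_sub_left 0).symm
    have heq : (fun x : ℝ => (1 - (0 - x)) ^ d * (1 + (0 - x)) ^ c * (p.comp (-X)).eval (0 - x))
        = fun x : ℝ => (1-x) ^ c * (1+x) ^ d * p.eval x := by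
      funext x
      rw [eval_comp]
      simp only [zero_sub, eval_neg, eval_X, neg_neg, sub_neg_eq_add, add_neg_cancel_left]
      ring
    rw [heq] at h2
    simpa using h2
  exact hl.trans hr

/-- Derivative of the weight times a polynomial. -/
lemma hasDerivAt_weight_mul (a b : ℝ) (p : ℝ[X]) {x : ℝ} (h2 : -1 < x) (h1 : x < 1) :
    HasDerivAt (fun y => (1 - y) ^ a * (1 + y) ^ b * p.eval y)
      ((1 - x) ^ (a - 1) * (1 + x) ^ (b - 1) *
        (((C b) * (1 - X) - (C a) * (1 + X)) * p + (1 - X ^ 2) * p.derivative).eval x) x := by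
  have h1' : (0:ℝ) < 1 - x := by linarith
  have h2' : (0:ℝ) < 1 + x := by linarith
  have hA : HasDerivAt (fun y : ℝ => (1 - y) ^ a) (-1 * a * (1 - x) ^ (a - 1)) x :=
    HasDerivAt.rpow_const (by simpa using (hasDerivAt_id x).const_sub 1) (Or.inl h1'.ne')
  have hB : HasDerivAt (fun y : ℝ => (1 + y) ^ b) (1 * b * (1 + x) ^ (b - 1)) x :=
    HasDerivAt.rpow_const (by simpa using (hasDerivAt_id x).const_add 1) (Or.inl h2'.ne')
  have hP := p.hasDerivAt x
  have H : HasDerivAt (fun y => (1 - y) ^ a * (1 + y) ^ b * p.eval y) _ x := (hA.mul hB).mul hP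
  convert H using 1
  have e1 : (1 - x) ^ a = (1 - x) ^ (a - 1) * (1 - x) := by
    have := Real.rpow_add_one h1'.ne' (a - 1)
    rw [sub_add_cancel] at this
    exact this
  have e2 : (1 + x) ^ b = (1 + x) ^ (b - 1) * (1 + x) := by
    have := Real.rpow_add_one h2'.ne' (b - 1)
    rw [sub_add_cancel] at this
    exact this
  simp only [eval_add, eval_mul, eval_sub, eval_one, eval_X, eval_C, eval_pow, Pi.mul_apply]
  rw [e1, e2]
  ring

/-- Representation of the iterated derivative of the weight on `Ioo (-1) 1`. -/
lemma rep (a b : ℝ) (m : ℕ) :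
    ∃ p : ℝ[X], ∀ x ∈ Ioo (-1:ℝ) 1,
      iteratedDeriv m (fun y => (1 - y) ^ a * (1 + y) ^ b) x
        = (1 - x) ^ (a - m) * (1 + x) ^ (b - m) * p.eval x := by
  induction m with
  | zero =>
    refine ⟨1, fun x hx => ?_⟩
    simp [iteratedDeriv_zero]
  | succ m ih =>
    obtain ⟨p, hp⟩ := ih
    refine ⟨((C (b - m)) * (1 - X) - (C (a - m)) * (1 + X)) * p + (1 - X ^ 2) * p.derivative,
      fun x hx => ?_⟩
    have hD := hasDerivAt_weight_mul (a - m) (b - m) p hx.1 hx.2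
    have heq : iteratedDeriv m (fun y => (1 - y) ^ a * (1 + y) ^ b)
        =ᶠ[nhds x] fun y => (1 - y) ^ (a - m) * (1 + y) ^ (b - m) * p.eval y := by
      filter_upwards [Ioo_mem_nhds hx.1 hx.2] with y hy using hp y hy
    have hD' : HasDerivAt (iteratedDeriv m (fun y => (1 - y) ^ a * (1 + y) ^ b))
        ((1 - x) ^ (a - m - 1) * (1 + x) ^ (b - m - 1) *
          (((C (b - m)) * (1 - X) - (C (a - m)) * (1 + X)) * p
            + (1 - X ^ 2) * p.derivative).eval x) x :=
      hD.congr_of_eventuallyEq heq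
    rw [iteratedDeriv_succ]
    rw [hD'.deriv]
    push_cast
    ring_nf

end JacobiMomentAux

namespace JacobiMomentAux2
open JacobiMomentAux

variable {a b : ℝ} {n : ℕ}

/-- Integrability of a polynomial times the `j`-th iterated derivative of the weight. -/
lemma II_iter (ha : (n:ℝ) - 1 < a) (hb : (n:ℝ) - 1 < b) (j : ℕ) (hj : j ≤ n) (q : ℝ[X]) :
    IntervalIntegrable (fun x => q.eval x *
      iteratedDeriv j (fun y => (1 - y) ^ a * (1 + y) ^ b) x) volume (-1) 1 := by
  obtain ⟨p, hp⟩ := rep a b j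
  have hja : -1 < a - j := by
    have : (j:ℝ) ≤ n := Nat.cast_le.2 hj
    linarith
  have hjb : -1 < b - j := by
    have : (j:ℝ) ≤ n := Nat.cast_le.2 hj
    linarith
  refine II_congr_Ioo (fun x hx => ?_) (II_weight (a - j) (b - j) hja hjb (p * q))
  rw [hp x hx, eval_mul]
  ring

/-- The `m`-th iterated derivative has derivative the `(m+1)`-st on `Ioo (-1) 1`. -/
lemma hasDerivAt_iter (m : ℕ) {x : ℝ} (hx : x ∈ Ioo (-1:ℝ) 1) :
    HasDerivAt (iteratedDeriv m (fun y => (1 - y) ^ a * (1 + y) ^ b))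
      (iteratedDeriv (m + 1) (fun y => (1 - y) ^ a * (1 + y) ^ b) x) x := by
  obtain ⟨p, hp⟩ := rep a b m
  have hD := hasDerivAt_weight_mul (a - m) (b - m) p hx.1 hx.2
  have heq : iteratedDeriv m (fun y => (1 - y) ^ a * (1 + y) ^ b)
      =ᶠ[nhds x] fun y => (1 - y) ^ (a - m) * (1 + y) ^ (b - m) * p.eval y := by
    filter_upwards [Ioo_mem_nhds hx.1 hx.2] with y hy using hp y hy
  have hD' := hD.congr_of_eventuallyEq heq
  have : iteratedDeriv (m + 1) (fun y => (1 - y) ^ a * (1 + y) ^ b) x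
      = (1 - x) ^ (a - m - 1) * (1 + x) ^ (b - m - 1) *
        (((C (b - m)) * (1 - X) - (C (a - m)) * (1 + X)) * p
          + (1 - X ^ 2) * p.derivative).eval x := by
    rw [iteratedDeriv_succ]; exact hD'.deriv
  rw [this]
  exact hD'

/-- Vanishing of polynomial times `m`-th iterated derivative at an endpoint `e ∈ {-1, 1}`,
within `Ioo`. -/
lemma tendsto_endpoint (ha : (n:ℝ) - 1 < a) (hb : (n:ℝ) - 1 < b)
    (m : ℕ) (hm : m < n) (q : ℝ[X]) :
    Tendsto (fun x => q.eval x * iteratedDeriv m (fun y => (1 - y) ^ a * (1 + y) ^ b) x)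
      (nhdsWithin 1 (Iio 1)) (nhds 0) ∧
    Tendsto (fun x => q.eval x * iteratedDeriv m (fun y => (1 - y) ^ a * (1 + y) ^ b) x)
      (nhdsWithin (-1) (Ioi (-1))) (nhds 0) := by
  obtain ⟨p, hp⟩ := rep a b m
  have hma : (0:ℝ) < a - m := by
    have : (m:ℝ) ≤ (n:ℝ) - 1 := by
      have : (m:ℝ) + 1 ≤ n := by exact_mod_cast Nat.succ_le_of_lt hm
      linarith
    linarith
  have hmb : (0:ℝ) < b - m := by
    have : (m:ℝ) ≤ (n:ℝ) - 1 := by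
      have : (m:ℝ) + 1 ≤ n := by exact_mod_cast Nat.succ_le_of_lt hm
      linarith
    linarith
  set G : ℝ → ℝ := fun x => (1 - x) ^ (a - m) * (1 + x) ^ (b - m) * (q * p).eval x with hG
  have hcont : ∀ z : ℝ, ContinuousAt G z := by
    intro z
    apply ContinuousAt.mul
    apply ContinuousAt.mul
    · exact (Real.continuousAt_rpow_const _ _ (Or.inr hma.le)).comp
        ((continuous_const.sub continuous_id).continuousAt)
    · exact (Real.continuousAt_rpow_const _ _ (Or.inr hmb.le)).comp
        ((continuous_const.add continuous_id).continuousAt)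
    · exact (q * p).continuous.continuousAt
  have hFeq : ∀ x ∈ Ioo (-1:ℝ) 1,
      q.eval x * iteratedDeriv m (fun y => (1 - y) ^ a * (1 + y) ^ b) x = G x := by
    intro x hx
    rw [hp x hx]
    simp only [hG, eval_mul]
    ring
  constructor
  · have hG1 : G 1 = 0 := by
      simp only [hG]
      rw [show (1:ℝ) - 1 = 0 by ring, Real.zero_rpow hma.ne']
      ring
    have h1 : Tendsto G (nhdsWithin 1 (Iio 1)) (nhds 0) := by
      rw [← hG1]
      exact ((hcont 1).tendsto).mono_left nhdsWithin_le_nhds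
    refine Tendsto.congr' ?_ h1
    filter_upwards [Ioo_mem_nhdsLT_of_mem (show (1:ℝ) ∈ Ioc (-1:ℝ) 1 by norm_num)] with x hx
    exact (hFeq x hx).symm
  · have hG1 : G (-1) = 0 := by
      simp only [hG]
      rw [show (1:ℝ) + -1 = 0 by ring, Real.zero_rpow hmb.ne']
      ring
    have h1 : Tendsto G (nhdsWithin (-1) (Ioi (-1))) (nhds 0) := by
      rw [← hG1]
      exact ((hcont (-1)).tendsto).mono_left nhdsWithin_le_nhds
    refine Tendsto.congr' ?_ h1
    filter_upwards [Ioo_mem_nhdsGT_of_mem (show (-1:ℝ) ∈ Ico (-1:ℝ) 1 by norm_num)] with x hx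
    exact (hFeq x hx).symm

/-- Integration by parts step. -/
lemma parts (ha : (n:ℝ) - 1 < a) (hb : (n:ℝ) - 1 < b) (p : ℝ[X]) (m : ℕ) (hm : m < n) :
    ∫ x in (-1:ℝ)..1, p.eval x * iteratedDeriv (m+1) (fun y => (1 - y) ^ a * (1 + y) ^ b) x
      = -∫ x in (-1:ℝ)..1,
          p.derivative.eval x * iteratedDeriv m (fun y => (1 - y) ^ a * (1 + y) ^ b) x := by
  set f : ℝ → ℝ := fun y => (1 - y) ^ a * (1 + y) ^ b with hf
  have hint1 : IntervalIntegrable (fun x => p.derivative.eval x * iteratedDeriv m f x)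
      volume (-1) 1 := II_iter ha hb m hm.le p.derivative
  have hint2 : IntervalIntegrable (fun x => p.eval x * iteratedDeriv (m+1) f x)
      volume (-1) 1 := II_iter ha hb (m+1) hm p
  have hderiv : ∀ x ∈ Ioo (-1:ℝ) 1,
      HasDerivAt (fun y => p.eval y * iteratedDeriv m f y)
        (p.derivative.eval x * iteratedDeriv m f x + p.eval x * iteratedDeriv (m+1) f x) x := by
    intro x hx
    exact (p.hasDerivAt x).mul (hasDerivAt_iter m hx)
  obtain ⟨hT1, hT2⟩ := tendsto_endpoint ha hb m hm p
  have key := intervalIntegral.integral_eq_sub_of_hasDerivAt_of_tendsto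
    (by norm_num : (-1:ℝ) < 1) hderiv (hint1.add hint2) hT2 hT1
  rw [intervalIntegral.integral_add hint1 hint2] at key
  linarith [key]

/-- Iterated integration by parts. -/
lemma chain (ha : (n:ℝ) - 1 < a) (hb : (n:ℝ) - 1 < b) (p : ℝ[X]) :
    ∀ j ≤ n, ∫ x in (-1:ℝ)..1,
        p.eval x * iteratedDeriv n (fun y => (1 - y) ^ a * (1 + y) ^ b) x
      = (-1:ℝ) ^ j * ∫ x in (-1:ℝ)..1, (derivative^[j] p).eval x *
          iteratedDeriv (n - j) (fun y => (1 - y) ^ a * (1 + y) ^ b) x := by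
  intro j
  induction j with
  | zero => intro _; simp
  | succ j ih =>
    intro hj
    have hj' : j ≤ n := Nat.le_of_succ_le hj
    have hnj : n - j = (n - (j+1)) + 1 := by omega
    rw [ih hj', hnj, parts ha hb (derivative^[j] p) (n - (j+1)) (by omega)]
    rw [← Function.iterate_succ_apply' derivative j p]
    ring

end JacobiMomentAux2

end JacobiAuxSection

/-- The Jacobi polynomial `P_n^{(α,β)}`, defined by the Rodrigues formula. -/
noncomputable def jacobiP (α β : ℝ) (n : ℕ) (x : ℝ) : ℝ :=
  ((-1 : ℝ) ^ n / (2 ^ n * (n.factorial : ℝ))) * (1 - x) ^ (-α) * (1 + x) ^ (-β) *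
    iteratedDeriv n (fun y => (1 - y) ^ ((n : ℝ) + α) * (1 + y) ^ ((n : ℝ) + β)) x

/-- The Jacobi normalization constant `h_n`. -/
noncomputable def jacobiH (α β : ℝ) (n : ℕ) : ℝ :=
  2 ^ (α + β + 1) * Real.Gamma ((n : ℝ) + α + 1) * Real.Gamma ((n : ℝ) + β + 1) /
    ((n.factorial : ℝ) * (2 * (n : ℝ) + α + β + 1) * Real.Gamma ((n : ℝ) + α + β + 1))

/-- The normalized Jacobi polynomial `𝑃̃_n^{(α,β)} = P_n^{(α,β)}/√h_n`. -/
noncomputable def jacobiPN (α β : ℝ) (n : ℕ) (x : ℝ) : ℝ :=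
  jacobiP α β n x / Real.sqrt (jacobiH α β n)

open Set Filter Polynomial intervalIntegral in
/-- The `k`-th moment of the normalized Jacobi polynomial for `n ≤ k`:
`∫_{-1}^{1} x^k 𝑃̃_n^{(α,β)}(x)(1-x)^α(1+x)^β dx
  = (1/(2^n √h_n)) binom(k,n) ∫_{-1}^{1} x^{k-n}(1-x)^{n+α}(1+x)^{n+β} dx`. -/
theorem normalized_jacobi_moment (α β : ℝ) (hα : -1 < α) (hβ : -1 < β)
    (n k : ℕ) (hnk : n ≤ k) :
    ∫ x in (-1 : ℝ)..1, x ^ k * jacobiPN α β n x * ((1 - x) ^ α * (1 + x) ^ β)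
      = (1 / (2 ^ n * Real.sqrt (jacobiH α β n))) * (k.choose n : ℝ) *
          ∫ x in (-1 : ℝ)..1, x ^ (k - n) * (1 - x) ^ ((n : ℝ) + α) * (1 + x) ^ ((n : ℝ) + β) := by
  have ha : (n:ℝ) - 1 < (n:ℝ) + α := by linarith
  have hb : (n:ℝ) - 1 < (n:ℝ) + β := by linarith
  set s : ℝ := (Real.sqrt (jacobiH α β n))⁻¹ with hs
  set c : ℝ := ((-1 : ℝ) ^ n / (2 ^ n * (n.factorial : ℝ))) with hc
  set f : ℝ → ℝ := fun y => (1 - y) ^ ((n : ℝ) + α) * (1 + y) ^ ((n : ℝ) + β) with hf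
  -- Step 1: rewrite the integrand
  have step1 : (∫ x in (-1 : ℝ)..1, x ^ k * jacobiPN α β n x * ((1 - x) ^ α * (1 + x) ^ β))
      = ∫ x in (-1 : ℝ)..1, (c * s) * (x ^ k * iteratedDeriv n f x) := by
    apply JacobiMomentAux.integral_congr_Ioo
    intro x hx
    have h1 : (0:ℝ) < 1 - x := by linarith [hx.2]
    have h2 : (0:ℝ) < 1 + x := by linarith [hx.1]
    have e1 : (1-x) ^ α ≠ 0 := (Real.rpow_pos_of_pos h1 α).ne'
    have e2 : (1+x) ^ β ≠ 0 := (Real.rpow_pos_of_pos h2 β).ne'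
    rw [jacobiPN, jacobiP, ← hf, ← hc, div_eq_mul_inv, ← hs,
      Real.rpow_neg h1.le, Real.rpow_neg h2.le]
    field_simp
  rw [step1, intervalIntegral.integral_const_mul]
  -- Step 2: iterated integration by parts
  have e3 : (∫ x in (-1:ℝ)..1, x ^ k * iteratedDeriv n f x)
      = ∫ x in (-1:ℝ)..1, (X ^ k : ℝ[X]).eval x * iteratedDeriv n f x := by
    apply JacobiMomentAux.integral_congr_Ioo
    intro x hx
    simp
  have step2 := JacobiMomentAux2.chain ha hb (X ^ k : ℝ[X]) n le_rfl
  rw [Nat.sub_self, iteratedDeriv_zero, Polynomial.iterate_derivative_X_pow_eq_C_mul] at step2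
  rw [← hf] at step2
  -- Step 3: clean up
  have e4 : (∫ x in (-1:ℝ)..1, (C ((k.descFactorial n : ℕ) : ℝ) * X ^ (k - n)).eval x * f x)
      = ((k.descFactorial n : ℕ) : ℝ) * ∫ x in (-1:ℝ)..1, x ^ (k-n) * f x := by
    rw [← intervalIntegral.integral_const_mul]
    apply JacobiMomentAux.integral_congr_Ioo
    intro x hx
    simp [mul_assoc]
  have e5 : (∫ x in (-1 : ℝ)..1, x ^ (k - n) * (1 - x) ^ ((n : ℝ) + α) * (1 + x) ^ ((n : ℝ) + β))
      = ∫ x in (-1:ℝ)..1, x ^ (k-n) * f x := by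
    apply JacobiMomentAux.integral_congr_Ioo
    intro x hx
    rw [hf]; ring
  rw [e3, step2, e4, e5]
  -- Step 4: coefficients
  have hsq : ((-1:ℝ) ^ n) * ((-1:ℝ) ^ n) = 1 := by
    rw [← mul_pow]; norm_num
  have hfac : ((n.factorial : ℕ) : ℝ) ≠ 0 := Nat.cast_ne_zero.2 n.factorial_ne_zero
  have h2n : ((2:ℝ) ^ n) ≠ 0 := by positivity
  have hdesc : ((k.descFactorial n : ℕ) : ℝ) = (n.factorial : ℝ) * (k.choose n : ℝ) := by
    rw [Nat.descFactorial_eq_factorial_mul_choose]; push_cast; ring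
  have hconst : (1:ℝ) / (2 ^ n * Real.sqrt (jacobiH α β n)) = s * (2 ^ n)⁻¹ := by
    rw [hs, one_div, mul_inv]; ring
  set J := ∫ x in (-1:ℝ)..1, x ^ (k-n) * f x with hJ
  rw [hdesc, hconst, hc]
  field_simp
  linear_combination (s * (k.choose n : ℝ) * J) * hsq
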